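/- Let I ⊆ ℝ be a nonempty interval, f : I → ℝ̄, n ≥ 2, s₁,…,sₙ ∈ (0,1), and let h : I → ℝ be a continuous strictly increasing function. If f is lower M_{sᵢh,(1−sᵢ)h}-convex for every i ∈ {1,…,n}, then f is lower M_{σᵢh,(1−σᵢ)h}-convex for every i ∈ {1,…,n}, where σᵢ := (Σ_{j=i}^{n} Π_{k=1}^{j} s_k/(1−s_k)) / (Σ_{j=0}^{n} Π_{k=1}^{j} s_k/(1−s_k)), with the empty product (j = 0) equal to 1. -/

import Mathlib

/-- `M` is a two-variable mean on `I` (its values on pairs `x > y` are irrelevant). -/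
def IsMeanOn (I : Set ℝ) (M : ℝ → ℝ → ℝ) : Prop :=
  ∀ x ∈ I, ∀ y ∈ I, x ≤ y → x ≤ M x y ∧ M x y ≤ y

/-- `M` is a strict two-variable mean on `I`. -/
def IsStrictMeanOn (I : Set ℝ) (M : ℝ → ℝ → ℝ) : Prop :=
  IsMeanOn I M ∧ ∀ x ∈ I, ∀ y ∈ I, x < y → x < M x y ∧ M x y < y

/-- The map `φ_{(x,y)}(t₁,…,tₙ) = (M₁(x,t₂), M₂(t₁,t₃), …, Mₙ(t_{n-1},y))`
(0-indexed: `M i` is the paper's `M_{i+1}`). -/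
def phiMap (n : ℕ) (M : Fin n → ℝ → ℝ → ℝ) (x y : ℝ) (t : Fin n → ℝ) : Fin n → ℝ :=
  fun i =>
    M i (if _h : (i : ℕ) = 0 then x else t ⟨(i : ℕ) - 1, by have := i.isLt; omega⟩)
        (if _h : (i : ℕ) = n - 1 then y else t ⟨(i : ℕ) + 1, by have := i.isLt; omega⟩)

/-- The fixed point set `Φ_{(x,y)} = {ξ ∈ [x,y]ⁿ_≤ : φ_{(x,y)}(ξ) = ξ}`. -/
def phiFixedSet (n : ℕ) (M : Fin n → ℝ → ℝ → ℝ) (x y : ℝ) : Set (Fin n → ℝ) :=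
  {t | (∀ i, t i ∈ Set.Icc x y) ∧ Monotone t ∧ phiMap n M x y t = t}

open Classical in
/-- The lower sum `x ∔ y` on the extended reals: `x + y` if both are `> -∞`
(with `(+∞) ∔ (+∞) = +∞`), and `-∞` as soon as one summand is `-∞`. -/
noncomputable def lsum (a b : EReal) : EReal := if a = ⊥ ∨ b = ⊥ then ⊥ else a + b

open Classical in
/-- The upper sum `x ⊎ y` on the extended reals: `x + y` if both are `< +∞`
(with `(-∞) ⊎ (-∞) = -∞`), and `+∞` as soon as one summand is `+∞`. -/
noncomputable def usum (a b : EReal) : EReal := if a = ⊤ ∨ b = ⊤ then ⊤ else a + b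

/-- The lower second-order divided difference `⌊x,y,z;f⌋`. -/
noncomputable def ldd (f : ℝ → EReal) (x y z : ℝ) : EReal :=
  lsum (lsum (((1 / ((y - x) * (z - x)) : ℝ) : EReal) * f x)
             (((1 / ((x - y) * (z - y)) : ℝ) : EReal) * f y))
       (((1 / ((x - z) * (y - z)) : ℝ) : EReal) * f z)

/-- The upper second-order divided difference `⌈x,y,z;f⌉`. -/
noncomputable def udd (f : ℝ → EReal) (x y z : ℝ) : EReal :=
  usum (usum (((1 / ((y - x) * (z - x)) : ℝ) : EReal) * f x)
             (((1 / ((x - y) * (z - y)) : ℝ) : EReal) * f y))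
       (((1 / ((x - z) * (y - z)) : ℝ) : EReal) * f z)

/-- `f : I → ℝ̄` is lower `M`-convex: `⌊x, M(x,y), y; f⌋ ≥ 0` for all `x < y` in `I`. -/
def LowerConvexWrt (I : Set ℝ) (M : ℝ → ℝ → ℝ) (f : ℝ → EReal) : Prop :=
  ∀ x ∈ I, ∀ y ∈ I, x < y → 0 ≤ ldd f x (M x y) y

/-- `f : I → ℝ̄` is upper `M`-convex: `⌈x, M(x,y), y; f⌉ ≥ 0` for all `x < y` in `I`. -/
def UpperConvexWrt (I : Set ℝ) (M : ℝ → ℝ → ℝ) (f : ℝ → EReal) : Prop :=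
  ∀ x ∈ I, ∀ y ∈ I, x < y → 0 ≤ udd f x (M x y) y

lemma ereal_cases (x : EReal) : x = ⊥ ∨ x = ⊤ ∨ ∃ v : ℝ, x = (v : EReal) := by
  induction x using EReal.rec with
  | bot => exact Or.inl rfl
  | top => exact Or.inr (Or.inl rfl)
  | coe v => exact Or.inr (Or.inr ⟨v, rfl⟩)

lemma ldd_nonneg_iff (f : ℝ → EReal) (a b c : ℝ) (hab : a < b) (hbc : b < c) :
    0 ≤ ldd f a b c ↔ f a ≠ ⊥ ∧ f c ≠ ⊥ ∧ f b ≠ ⊤ ∧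
      ((c - a : ℝ) : EReal) * f b ≤ ((c - b : ℝ) : EReal) * f a + ((b - a : ℝ) : EReal) * f c := by
  have hac : a < c := hab.trans hbc
  have h1 : (0:ℝ) < 1 / ((b - a) * (c - a)) := by
    apply div_pos one_pos; apply mul_pos <;> linarith
  have h2 : 1 / ((a - b) * (c - b)) < (0:ℝ) := by
    apply div_neg_of_pos_of_neg one_pos
    apply mul_neg_of_neg_of_pos (by linarith) (by linarith)
  have h3 : (0:ℝ) < 1 / ((a - c) * (b - c)) := by
    apply div_pos one_pos
    apply mul_pos_of_neg_of_neg (by linarith) (by linarith)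
  have hca : (0:ℝ) < c - a := by linarith
  have hcb : (0:ℝ) < c - b := by linarith
  have hba : (0:ℝ) < b - a := by linarith
  have e1b := EReal.coe_mul_bot_of_pos h1
  have e1t := EReal.coe_mul_top_of_pos h1
  have e2b := EReal.coe_mul_bot_of_neg h2
  have e2t := EReal.coe_mul_top_of_neg h2
  have e3b := EReal.coe_mul_bot_of_pos h3
  have e3t := EReal.coe_mul_top_of_pos h3
  have fca_b := EReal.coe_mul_bot_of_pos hca
  have fca_t := EReal.coe_mul_top_of_pos hca
  have fcb_b := EReal.coe_mul_bot_of_pos hcb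
  have fcb_t := EReal.coe_mul_top_of_pos hcb
  have fba_b := EReal.coe_mul_bot_of_pos hba
  have fba_t := EReal.coe_mul_top_of_pos hba
  unfold ldd lsum
  induction f a using EReal.rec <;> induction f b using EReal.rec <;>
    induction f c using EReal.rec <;>
    simp only [e1b, e1t, e2b, e2t, e3b, e3t, fca_b, fca_t, fcb_b, fcb_t, fba_b, fba_t,
      ← EReal.coe_mul] <;>
    simp [-EReal.coe_mul, ← EReal.coe_mul, e1b, e1t, e2b, e2t, e3b, e3t, fca_b, fca_t, fcb_b, fcb_t, fba_b, fba_t, EReal.coe_ne_bot, EReal.top_add_coe, EReal.coe_add_top, EReal.top_add_top, le_top]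
  rename_i A B C
  rw [← EReal.coe_add, ← EReal.coe_add]
  norm_cast
  rw [show (c - a)⁻¹ * (b - a)⁻¹ * A + (c - b)⁻¹ * (a - b)⁻¹ * B + (b - c)⁻¹ * (a - c)⁻¹ * C
      = ((c - b) * A - (c - a) * B + (b - a) * C) / ((b - a) * ((c - b) * (c - a))) from by
    have n1 : b - a ≠ 0 := by linarith
    have n2 : c - b ≠ 0 := by linarith
    have n3 : c - a ≠ 0 := by linarith
    have n4 : a - b ≠ 0 := by linarith
    have n5 : b - c ≠ 0 := by linarith
    have n6 : a - c ≠ 0 := by linarith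
    field_simp
    ring]
  rw [le_div_iff₀ (mul_pos hba (mul_pos hcb hca))]
  constructor <;> intro H <;> nlinarith [H]

lemma chain_lemma (m : ℕ) (ξ g : ℕ → ℝ)
    (hξ : ∀ j ≤ m, ξ j < ξ (j + 1))
    (H : ∀ j, 1 ≤ j → j ≤ m →
      (ξ (j+1) - ξ (j-1)) * g j ≤ (ξ (j+1) - ξ j) * g (j-1) + (ξ j - ξ (j-1)) * g (j+1)) :
    ∀ k, 1 ≤ k → k ≤ m →
      (ξ (m+1) - ξ 0) * g k ≤ (ξ (m+1) - ξ k) * g 0 + (ξ k - ξ 0) * g (m+1) := by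
  intro k hk1 hkm
  set sl : ℕ → ℝ := fun j => (g (j+1) - g j) / (ξ (j+1) - ξ j) with hsl
  have hΔ : ∀ j ≤ m, 0 < ξ (j+1) - ξ j := fun j hj => by linarith [hξ j hj]
  have hslm : ∀ j ≤ m, g (j+1) - g j = sl j * (ξ (j+1) - ξ j) := by
    intro j hj
    rw [hsl]
    rw [div_mul_cancel₀ _ (ne_of_gt (hΔ j hj))]
  have step : ∀ j, j + 1 ≤ m → sl j ≤ sl (j+1) := by
    intro j hj
    have h := H (j+1) (by omega) hj
    simp only [Nat.add_sub_cancel] at h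
    have d1 := hΔ j (by omega)
    have d2 := hΔ (j+1) hj
    rw [hsl, div_le_div_iff₀ d1 d2]
    nlinarith [h, d1, d2]
  have mono : ∀ p q, p ≤ q → q ≤ m → sl p ≤ sl q := by
    intro p q hpq hqm
    induction q with
    | zero =>
      obtain rfl : p = 0 := Nat.le_zero.mp hpq
      exact le_refl _
    | succ q ih =>
      rcases Nat.eq_or_lt_of_le hpq with rfl | hlt
      · exact le_refl _
      · exact le_trans (ih (by omega) (by omega)) (step q hqm)
  -- ordering of ξ
  have ord : ∀ p q, p < q → q ≤ m + 1 → ξ p < ξ q := by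
    intro p q hpq hqm
    induction q with
    | zero => omega
    | succ q ih =>
      rcases Nat.eq_or_lt_of_le (Nat.lt_succ_iff.mp hpq) with rfl | hlt
      · exact hξ p (by omega)
      · exact lt_trans (ih hlt (by omega)) (hξ q (by omega))
  have h0k : 0 < ξ k - ξ 0 := by linarith [ord 0 k hk1 (by omega)]
  have hkM : 0 < ξ (m+1) - ξ k := by linarith [ord k (m+1) (by omega) (le_refl _)]
  -- Ineq1 : g k - g 0 ≤ sl k * (ξ k - ξ 0)
  have tele1 : ∑ j ∈ Finset.range k, (g (j+1) - g j) = g k - g 0 := Finset.sum_range_sub g k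
  have tele1' : ∑ j ∈ Finset.range k, (ξ (j+1) - ξ j) = ξ k - ξ 0 := Finset.sum_range_sub ξ k
  have ineq1 : g k - g 0 ≤ sl k * (ξ k - ξ 0) := by
    rw [← tele1, ← tele1', Finset.mul_sum]
    apply Finset.sum_le_sum
    intro j hj
    simp only [Finset.mem_range] at hj
    rw [hslm j (by omega)]
    exact mul_le_mul_of_nonneg_right (mono j k (by omega) hkm) (le_of_lt (hΔ j (by omega)))
  -- Ineq2 : sl k * (ξ (m+1) - ξ k) ≤ g (m+1) - g k
  have tele2 : ∑ j ∈ Finset.Ico k (m+1), (g (j+1) - g j) = g (m+1) - g k := by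
    rw [Finset.sum_Ico_eq_sub _ (by omega), Finset.sum_range_sub g _, Finset.sum_range_sub g _]
    ring
  have tele2' : ∑ j ∈ Finset.Ico k (m+1), (ξ (j+1) - ξ j) = ξ (m+1) - ξ k := by
    rw [Finset.sum_Ico_eq_sub _ (by omega), Finset.sum_range_sub ξ _, Finset.sum_range_sub ξ _]
    ring
  have ineq2 : sl k * (ξ (m+1) - ξ k) ≤ g (m+1) - g k := by
    rw [← tele2, ← tele2', Finset.mul_sum]
    apply Finset.sum_le_sum
    intro j hj
    simp only [Finset.mem_Ico] at hj
    rw [hslm j (by omega)]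
    exact mul_le_mul_of_nonneg_right (mono k j (by omega) (by omega)) (le_of_lt (hΔ j (by omega)))
  nlinarith [mul_le_mul_of_nonneg_left ineq1 (le_of_lt hkM),
    mul_le_mul_of_nonneg_left ineq2 (le_of_lt h0k)]

/-- If `f` is lower convex with respect to each weighted
quasi-arithmetic mean `M_{sᵢh,(1-sᵢ)h}` (here `Ms i`, `i = 0,…,n-1`, characterized by
membership in `I` and `h (Ms i x y) = s i · h x + (1 - s i) · h y`, `s i` being the
paper's `s_{i+1}`), then `f` is lower convex with respect to each `M_{σᵢh,(1-σᵢ)h}`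
(here `Mσ i`, using the weight `σ (i+1)` in the paper's indexing). -/
theorem stmt18 (I : Set ℝ) (hI : Set.OrdConnected I) (hne : I.Nonempty)
    (f : ℝ → EReal) (n : ℕ) (hn : 2 ≤ n)
    (s : ℕ → ℝ) (hs : ∀ i < n, s i ∈ Set.Ioo (0 : ℝ) 1)
    (h : ℝ → ℝ) (hmono : StrictMonoOn h I) (hcont : ContinuousOn h I)
    (Ms : ℕ → ℝ → ℝ → ℝ)
    (hMs : ∀ i < n, ∀ x ∈ I, ∀ y ∈ I, x ≤ y →
      Ms i x y ∈ I ∧ h (Ms i x y) = s i * h x + (1 - s i) * h y)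
    (σ : ℕ → ℝ)
    (hσ : ∀ i, σ i =
      (∑ j ∈ Finset.Icc i n, ∏ k ∈ Finset.range j, s k / (1 - s k)) /
      (∑ j ∈ Finset.range (n + 1), ∏ k ∈ Finset.range j, s k / (1 - s k)))
    (Mσ : ℕ → ℝ → ℝ → ℝ)
    (hMσ : ∀ i < n, ∀ x ∈ I, ∀ y ∈ I, x ≤ y →
      Mσ i x y ∈ I ∧ h (Mσ i x y) = σ (i + 1) * h x + (1 - σ (i + 1)) * h y)
    (hconv : ∀ i < n, LowerConvexWrt I (Ms i) f) :
    ∀ i < n, LowerConvexWrt I (Mσ i) f := by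
  -- basic facts about the weights
  set P : ℕ → ℝ := fun j => ∏ k ∈ Finset.range j, s k / (1 - s k) with hPdef
  set S : ℝ := ∑ j ∈ Finset.range (n + 1), P j with hSdef
  have hP : ∀ j ≤ n, 0 < P j := by
    intro j hj
    apply Finset.prod_pos
    intro k hk
    simp only [Finset.mem_range] at hk
    obtain ⟨hs1, hs2⟩ := hs k (by omega)
    exact div_pos hs1 (by linarith)
  have hS : 0 < S := by
    rw [hSdef]
    apply Finset.sum_pos
    · intro j hj
      simp only [Finset.mem_range] at hj
      exact hP j (by omega)
    · exact ⟨0, by simp⟩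
  have hσdiff : ∀ j ≤ n, σ j - σ (j + 1) = P j / S := by
    intro j hj
    rw [hσ j, hσ (j + 1), div_sub_div_same]
    congr 1
    have : Finset.Icc j n = Finset.Ico j (n + 1) := by rw [Finset.Ico_add_one_right_eq_Icc]
    have h2 : Finset.Icc (j + 1) n = Finset.Ico (j + 1) (n + 1) := by rw [Finset.Ico_add_one_right_eq_Icc]
    rw [this, h2, Finset.sum_eq_sum_Ico_succ_bot (by omega) _]
    ring
  have hσ0 : σ 0 = 1 := by
    rw [hσ 0]
    have : Finset.Icc 0 n = Finset.range (n + 1) := by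
      rw [Finset.range_eq_Ico, Finset.Ico_add_one_right_eq_Icc]
    rw [this, div_self (ne_of_gt hS)]
  have hσn : σ (n + 1) = 0 := by
    rw [hσ (n + 1)]
    rw [Finset.Icc_eq_empty (by omega)]
    simp
  -- fix i and points x < y
  intro i hi x hx y hy hxy
  have hhxy : h x < h y := hmono hx hy hxy
  set ξ : ℕ → ℝ := fun j => if j = 0 then x else if j = n + 1 then y else Mσ (j - 1) x y
    with hξdef
  have hξ0 : ξ 0 = x := by simp [hξdef]
  have hξn : ξ (n + 1) = y := by simp [hξdef]
  have ξfacts : ∀ j ≤ n + 1, ξ j ∈ I ∧ h (ξ j) = σ j * h x + (1 - σ j) * h y := by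
    intro j hj
    rcases Nat.eq_zero_or_pos j with rfl | hj1
    · rw [hξ0, hσ0]; exact ⟨hx, by ring⟩
    rcases Nat.eq_or_lt_of_le hj with rfl | hj2
    · rw [hξn, hσn]; exact ⟨hy, by ring⟩
    have hj' : j - 1 < n := by omega
    have hξj : ξ j = Mσ (j - 1) x y := by
      rw [hξdef]; simp only [if_neg (by omega : ¬ j = 0), if_neg (by omega : ¬ j = n + 1)]
    obtain ⟨hmem, hv⟩ := hMσ (j - 1) hj' x hx y hy (le_of_lt hxy)
    rw [hξj]
    refine ⟨hmem, ?_⟩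
    rw [hv]
    have e : j - 1 + 1 = j := by omega
    rw [e]
  have ξmem : ∀ j ≤ n + 1, ξ j ∈ I := fun j hj => (ξfacts j hj).1
  have hval : ∀ j ≤ n + 1, h (ξ j) = σ j * h x + (1 - σ j) * h y :=
    fun j hj => (ξfacts j hj).2
  have hcons : ∀ j ≤ n, ξ j < ξ (j + 1) := by
    intro j hj
    have hd := hσdiff j hj
    have hPS : 0 < P j / S := div_pos (hP j hj) hS
    have : h (ξ j) < h (ξ (j + 1)) := by
      rw [hval j (by omega), hval (j + 1) (by omega)]
      nlinarith [hd, hPS, hhxy]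
    exact (hmono.lt_iff_lt (ξmem j (by omega)) (ξmem (j + 1) (by omega))).mp this
  have ord : ∀ p q, p < q → q ≤ n + 1 → ξ p < ξ q := by
    intro p q hpq hqm
    induction q with
    | zero => omega
    | succ q ih =>
      rcases Nat.eq_or_lt_of_le (Nat.lt_succ_iff.mp hpq) with rfl | hlt
      · exact hcons p (by omega)
      · exact lt_trans (ih hlt (by omega)) (hcons q (by omega))
  -- the triples inequalities
  have key : ∀ j, 1 ≤ j → j ≤ n → 0 ≤ ldd f (ξ (j - 1)) (ξ j) (ξ (j + 1)) := by
    intro j hj1 hjn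
    obtain ⟨j', rfl⟩ : ∃ j', j = j' + 1 := ⟨j - 1, by omega⟩
    simp only [Nat.add_sub_cancel]
    have hlt : ξ j' < ξ (j' + 2) := ord j' (j' + 2) (by omega) (by omega)
    have hms := hMs j' (by omega) (ξ j') (ξmem j' (by omega)) (ξ (j' + 2))
      (ξmem (j' + 2) (by omega)) (le_of_lt hlt)
    have heq : Ms j' (ξ j') (ξ (j' + 2)) = ξ (j' + 1) := by
      apply hmono.injOn hms.1 (ξmem (j' + 1) (by omega))
      rw [hms.2, hval j' (by omega), hval (j' + 1) (by omega), hval (j' + 2) (by omega)]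
      have hd1 := hσdiff j' (by omega)
      have hd2 := hσdiff (j' + 1) (by omega)
      have hprod : P (j' + 1) = P j' * (s j' / (1 - s j')) := Finset.prod_range_succ _ _
      obtain ⟨hs1, hs2⟩ := hs j' (by omega)
      have h1s : (1:ℝ) - s j' ≠ 0 := by linarith
      have hkey : s j' * P j' = (1 - s j') * P (j' + 1) := by
        rw [hprod]
        field_simp
      have hkey2 : s j' * (σ j' - σ (j' + 1)) = (1 - s j') * (σ (j' + 1) - σ (j' + 2)) := by
        rw [hd1, hd2, ← mul_div_assoc, ← mul_div_assoc, hkey]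
      nlinarith [hkey2]
    have := hconv j' (by omega) (ξ j') (ξmem j' (by omega)) (ξ (j' + 2))
      (ξmem (j' + 2) (by omega)) hlt
    rwa [heq] at this
  -- extract finiteness information
  have keyiff : ∀ j, 1 ≤ j → j ≤ n →
      f (ξ (j - 1)) ≠ ⊥ ∧ f (ξ (j + 1)) ≠ ⊥ ∧ f (ξ j) ≠ ⊤ ∧
      ((ξ (j + 1) - ξ (j - 1) : ℝ) : EReal) * f (ξ j) ≤
        ((ξ (j + 1) - ξ j : ℝ) : EReal) * f (ξ (j - 1)) +
        ((ξ j - ξ (j - 1) : ℝ) : EReal) * f (ξ (j + 1)) := by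
    intro j hj1 hjn
    exact (ldd_nonneg_iff f _ _ _ (ord (j - 1) j (by omega) (by omega))
      (ord j (j + 1) (by omega) (by omega))).mp (key j hj1 hjn)
  have hbot : ∀ j ≤ n + 1, f (ξ j) ≠ ⊥ := by
    intro j hj
    rcases Nat.lt_or_ge j 2 with hj2 | hj2
    · have := keyiff (j + 1) (by omega) (by omega)
      simpa using this.1
    · have := keyiff (j - 1) (by omega) (by omega)
      have e : j - 1 + 1 = j := by omega
      rw [e] at this
      exact this.2.1
  have htop : ∀ j, 1 ≤ j → j ≤ n → f (ξ j) ≠ ⊤ := fun j h1 h2 => (keyiff j h1 h2).2.2.1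
  -- interior values are real
  have hmid : ∀ j, 1 ≤ j → j ≤ n → f (ξ j) = ((f (ξ j)).toReal : ℝ) := by
    intro j h1 h2
    exact (EReal.coe_toReal (htop j h1 h2) (hbot j (by omega))).symm
  -- the goal
  have hξmid : ξ (i + 1) = Mσ i x y := by
    rw [hξdef]
    simp only [if_neg (by omega : ¬ i + 1 = 0), if_neg (by omega : ¬ i + 1 = n + 1),
      Nat.add_sub_cancel]
  rw [← hξmid, ← hξ0, ← hξn]
  rw [ldd_nonneg_iff f _ _ _ (ord 0 (i + 1) (by omega) (by omega))
    (ord (i + 1) (n + 1) (by omega) (by omega))]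
  refine ⟨hbot 0 (by omega), hbot (n + 1) (by omega), htop (i + 1) (by omega) (by omega), ?_⟩
  have hm1 : (0:ℝ) < ξ (n + 1) - ξ (i + 1) := by
    linarith [ord (i + 1) (n + 1) (by omega) (by omega)]
  have hm2 : (0:ℝ) < ξ (i + 1) - ξ 0 := by linarith [ord 0 (i + 1) (by omega) (by omega)]
  rcases ereal_cases (f (ξ 0)) with htop0 | htop0 | ⟨v0, htop0⟩
  · exact absurd htop0 (hbot 0 (by omega))
  · -- f (ξ 0) = ⊤
    rw [htop0, EReal.coe_mul_top_of_pos hm1, EReal.top_add_of_ne_bot]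
    · exact le_top
    · intro hc
      rcases ereal_cases (f (ξ (n + 1))) with hcn | hcn | ⟨vn, hcn⟩
      · exact (hbot (n + 1) (by omega)) hcn
      · rw [hcn, EReal.coe_mul_top_of_pos hm2] at hc
        exact absurd hc (by simp)
      · rw [hcn, ← EReal.coe_mul] at hc
        exact (EReal.coe_ne_bot _) hc
  rcases ereal_cases (f (ξ (n + 1))) with htopn | htopn | ⟨vn, htopn⟩
  · exact absurd htopn (hbot (n + 1) (by omega))
  · -- f (ξ (n+1)) = ⊤
    rw [htopn, EReal.coe_mul_top_of_pos hm2, EReal.add_top_of_ne_bot]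
    · exact le_top
    · rw [htop0, ← EReal.coe_mul]
      exact EReal.coe_ne_bot _
  -- all real case
  set g : ℕ → ℝ := fun j => (f (ξ j)).toReal with hg
  have hgoal := chain_lemma n ξ g hcons ?_ (i + 1) (by omega) (by omega)
  · have e0 : g 0 = v0 := by simp only [hg]; rw [htop0]; simp
    have en : g (n + 1) = vn := by simp only [hg]; rw [htopn]; simp
    have emid : f (ξ (i + 1)) = ((g (i + 1) : ℝ) : EReal) :=
      hmid (i + 1) (by omega) (by omega)
    rw [e0, en] at hgoal
    rw [emid, htop0, htopn, ← EReal.coe_mul, ← EReal.coe_mul, ← EReal.coe_mul,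
      ← EReal.coe_add, EReal.coe_le_coe_iff]
    exact hgoal
  · intro j hj1 hjn
    obtain ⟨hb1, hb2, ht1, hineq⟩ := keyiff j hj1 hjn
    obtain ⟨j', rfl⟩ : ∃ j', j = j' + 1 := ⟨j - 1, by omega⟩
    simp only [Nat.add_sub_cancel] at hineq hb1 ⊢
    rcases ereal_cases (f (ξ j')) with hv1 | hv1 | ⟨a, hv1⟩
    · exact absurd hv1 hb1
    · exfalso
      rcases Nat.eq_zero_or_pos j' with rfl | hj'pos
      · rw [htop0] at hv1; exact (by simp at hv1)
      · exact (htop j' (by omega) (by omega)) hv1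
    rcases ereal_cases (f (ξ (j' + 2))) with hv3 | hv3 | ⟨c, hv3⟩
    · exact absurd hv3 hb2
    · exfalso
      rcases Nat.lt_or_ge (j' + 2) (n + 1) with hlt2 | hge
      · exact (htop (j' + 2) (by omega) (by omega)) hv3
      · have he : j' + 2 = n + 1 := by omega
        rw [he, htopn] at hv3; exact (by simp at hv3)
    rcases ereal_cases (f (ξ (j' + 1))) with hv2 | hv2 | ⟨b, hv2⟩
    · exact absurd hv2 (hbot (j' + 1) (by omega))
    · exact absurd hv2 (htop (j' + 1) (by omega) (by omega))
    have eg1 : g j' = a := by simp only [hg]; rw [hv1]; simp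
    have eg2 : g (j' + 1) = b := by simp only [hg]; rw [hv2]; simp
    have eg3 : g (j' + 2) = c := by simp only [hg]; rw [hv3]; simp
    rw [eg1, eg2, eg3]
    rw [hv1, hv2, hv3, ← EReal.coe_mul, ← EReal.coe_mul, ← EReal.coe_mul, ← EReal.coe_add,
      EReal.coe_le_coe_iff] at hineq
    exact hineq
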